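/- Fix an integer L ≥ 2 and positive real constants δ_idle, δ_coll, δ_succ. Then the function f_L(p) = δ_idle/(L p) + (1/(L p (1−p)^{L−1}) − 1/(L p) − 1)·δ_coll + δ_succ attains a minimum on the open interval (0,1), and the minimizer p_opt ∈ (0,1) is unique. -/

import Mathlib

open Set Finset

lemma geom_aux (p : ℝ) (hp0 : p ≠ 0) (hp1 : (1:ℝ) - p ≠ 0) (m : ℕ) :
    (∑ k ∈ Finset.range m, ((1 - p)⁻¹) ^ (k + 1)) = (((1 - p) ^ m)⁻¹ - 1) / p := by
  induction m with
  | zero => simp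
  | succ n ih =>
    rw [Finset.sum_range_succ, ih]
    have hpow : (1 - p) ^ n ≠ 0 := pow_ne_zero _ hp1
    rw [inv_pow]
    field_simp
    ring

lemma strict_const_mul {s : Set ℝ} {f : ℝ → ℝ} (hf : StrictConvexOn ℝ s f) {c : ℝ}
    (hc : 0 < c) : StrictConvexOn ℝ s fun x => c * f x := by
  refine ⟨hf.1, fun x hx y hy hxy a b ha hb hab => ?_⟩
  have := hf.2 hx hy hxy ha hb hab
  simp only [smul_eq_mul] at *
  nlinarith

lemma inv_strict : StrictConvexOn ℝ (Set.Ioo (0:ℝ) 1) fun p : ℝ => p⁻¹ := by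
  have h := (strictConvexOn_zpow (m := -1) (by norm_num) (by norm_num)).subset
    (Set.Ioo_subset_Ioi_self) (convex_Ioo 0 1)
  simpa using h

lemma term_convex (k : ℕ) : ConvexOn ℝ (Set.Ioo (0:ℝ) 1) fun p : ℝ => ((1 - p)⁻¹) ^ (k + 1) := by
  have hbase : StrictConvexOn ℝ (Set.Ioi (0:ℝ)) fun x : ℝ => x ^ (-(k + 1 : ℕ) : ℤ) :=
    strictConvexOn_zpow (by omega) (by omega)
  have hcomp := (hbase.convexOn.comp_affineMap (AffineMap.lineMap (1:ℝ) (0:ℝ)))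
  have hsub : Set.Ioo (0:ℝ) 1 ⊆ (AffineMap.lineMap (1:ℝ) (0:ℝ)) ⁻¹' Set.Ioi 0 := by
    intro x hx
    simp [AffineMap.lineMap_apply]
    linarith [hx.2]
  have h2 := hcomp.subset hsub (convex_Ioo 0 1)
  refine h2.congr fun x hx => ?_
  have hx' : (AffineMap.lineMap (1:ℝ) (0:ℝ)) x = 1 - x := by
    simp [AffineMap.lineMap_apply]
    ring
  simp only [Function.comp_apply, hx']
  rw [zpow_neg, zpow_natCast, inv_pow]

lemma sum_convex (m : ℕ) :
    ConvexOn ℝ (Set.Ioo (0:ℝ) 1)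
      (fun p : ℝ => ∑ k ∈ Finset.range m, ((1 - p)⁻¹) ^ (k + 1)) := by
  induction m with
  | zero => simpa using convexOn_const (0:ℝ) (convex_Ioo 0 1)
  | succ n ih =>
    refine (ih.add (term_convex n)).congr (fun p _ => ?_)
    simp [Finset.sum_range_succ]

/-- For `L ≥ 2` and positive constants, `f_L` attains a minimum on `(0,1)`, and the
minimizer `p_opt ∈ (0,1)` is unique. -/
theorem fL_exists_unique_minimizer (L : ℕ) (hL : 2 ≤ L)
    (δidle δcoll δsucc : ℝ) (hidle : 0 < δidle) (hcoll : 0 < δcoll) (hsucc : 0 < δsucc) :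
    ∃ popt ∈ Set.Ioo (0 : ℝ) 1,
      (∀ q ∈ Set.Ioo (0 : ℝ) 1,
          δidle / (L * popt)
            + (1 / (L * popt * (1 - popt) ^ (L - 1)) - 1 / (L * popt) - 1) * δcoll + δsucc
          ≤ δidle / (L * q)
            + (1 / (L * q * (1 - q) ^ (L - 1)) - 1 / (L * q) - 1) * δcoll + δsucc) ∧
      ∀ p' ∈ Set.Ioo (0 : ℝ) 1,
        (∀ q ∈ Set.Ioo (0 : ℝ) 1,
            δidle / (L * p')
              + (1 / (L * p' * (1 - p') ^ (L - 1)) - 1 / (L * p') - 1) * δcoll + δsucc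
            ≤ δidle / (L * q)
              + (1 / (L * q * (1 - q) ^ (L - 1)) - 1 / (L * q) - 1) * δcoll + δsucc) →
        p' = popt := by
  have hL2 : (2:ℝ) ≤ (L:ℝ) := by exact_mod_cast hL
  have hL0 : (0:ℝ) < L := by linarith
  have hL0' : (L:ℝ) ≠ 0 := ne_of_gt hL0
  set G : ℝ → ℝ := fun p => δidle / L * p⁻¹
      + δcoll / L * (∑ k ∈ Finset.range (L - 1), ((1 - p)⁻¹) ^ (k + 1)) + (δsucc - δcoll)
    with hGdef
  clear_value G
  have key : ∀ p ∈ Set.Ioo (0:ℝ) 1,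
      δidle / (L * p) + (1 / (L * p * (1 - p) ^ (L - 1)) - 1 / (L * p) - 1) * δcoll + δsucc
        = G p := by
    intro p hp
    have hp0 : p ≠ 0 := ne_of_gt hp.1
    have hp1 : (1:ℝ) - p ≠ 0 := sub_ne_zero.mpr hp.2.ne'
    have hpow : (1 - p) ^ (L - 1) ≠ 0 := pow_ne_zero _ hp1
    simp only [hGdef]
    rw [geom_aux p hp0 hp1 (L - 1)]
    field_simp
    ring
  have hGstrict : StrictConvexOn ℝ (Set.Ioo (0:ℝ) 1) G := by
    have h1 := strict_const_mul inv_strict (show 0 < δidle / (L:ℝ) by positivity)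
    have h2 := (sum_convex (L - 1)).smul (le_of_lt (show 0 < δcoll / (L:ℝ) by positivity))
    have h3 := (h1.add_convexOn h2).add_convexOn
      (convexOn_const (δsucc - δcoll) (convex_Ioo (0:ℝ) 1))
    refine h3.congr (fun p _ => ?_)
    simp [smul_eq_mul, hGdef]
  have hGcont : ContinuousOn G (Set.Ioo (0:ℝ) 1) := by
    rw [hGdef]
    apply ContinuousOn.add
    apply ContinuousOn.add
    · exact continuousOn_const.mul
        ((continuous_id.continuousOn).inv₀ fun p hp => ne_of_gt hp.1)
    · refine continuousOn_const.mul ?_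
      refine continuousOn_finset_sum _ fun k _ => ?_
      exact ((continuousOn_const.sub (continuous_id.continuousOn)).inv₀
        fun p hp => sub_ne_zero.mpr hp.2.ne').pow _
    · exact continuousOn_const
  have hsum_nonneg : ∀ p ∈ Set.Ioo (0:ℝ) 1,
      0 ≤ ∑ k ∈ Finset.range (L - 1), ((1 - p)⁻¹) ^ (k + 1) := by
    intro p hp
    have h : 0 < 1 - p := by linarith [hp.2]
    exact Finset.sum_nonneg fun k _ => by positivity
  have hfirst : ∀ p ∈ Set.Ioo (0:ℝ) 1,
      (1 - p)⁻¹ ≤ ∑ k ∈ Finset.range (L - 1), ((1 - p)⁻¹) ^ (k + 1) := by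
    intro p hp
    have h : 0 < 1 - p := by linarith [hp.2]
    have h0 : 0 ∈ Finset.range (L - 1) := by simp; omega
    have := Finset.single_le_sum (f := fun k => ((1 - p)⁻¹) ^ (k + 1))
      (fun k _ => by positivity) h0
    simpa using this
  have hlb1 : ∀ p ∈ Set.Ioo (0:ℝ) 1, δidle / L * p⁻¹ + (δsucc - δcoll) ≤ G p := by
    intro p hp
    have h2 : 0 ≤ δcoll / L * (∑ k ∈ Finset.range (L - 1), ((1 - p)⁻¹) ^ (k + 1)) :=
      mul_nonneg (by positivity) (hsum_nonneg p hp)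
    simp only [hGdef]
    linarith
  have hlb2 : ∀ p ∈ Set.Ioo (0:ℝ) 1, δcoll / L * (1 - p)⁻¹ + (δsucc - δcoll) ≤ G p := by
    intro p hp
    have h1 : 0 ≤ δidle / L * p⁻¹ := mul_nonneg (by positivity) (by
      have := hp.1; positivity)
    have h3 : δcoll / L * (1 - p)⁻¹
        ≤ δcoll / L * (∑ k ∈ Finset.range (L - 1), ((1 - p)⁻¹) ^ (k + 1)) :=
      mul_le_mul_of_nonneg_left (hfirst p hp) (by positivity)
    simp only [hGdef]
    linarith
  have hhalf : (1/2 : ℝ) ∈ Set.Ioo (0:ℝ) 1 := by norm_num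
  have hMc : (δsucc - δcoll) ≤ G (1/2) := by
    have h0 : (0:ℝ) ≤ δidle / L * ((1/2 : ℝ))⁻¹ := by positivity
    linarith [hlb1 _ hhalf]
  have hD : 0 < G (1/2) - (δsucc - δcoll) + 1 := by linarith
  set ε₁ := (δidle / L) / (G (1/2) - (δsucc - δcoll) + 1) with hε₁
  set ε₂ := (δcoll / L) / (G (1/2) - (δsucc - δcoll) + 1) with hε₂
  have hε₁0 : 0 < ε₁ := div_pos (by positivity) hD
  have hε₂0 : 0 < ε₂ := div_pos (by positivity) hD
  set a := min (1/2 : ℝ) (ε₁/2) with hadef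
  set b := max (1/2 : ℝ) (1 - ε₂/2) with hbdef
  have ha0 : 0 < a := lt_min (by norm_num) (by linarith)
  have ha2 : a ≤ 1/2 := min_le_left _ _
  have hb2 : 1/2 ≤ b := le_max_left _ _
  have hb1 : b < 1 := max_lt (by norm_num) (by linarith)
  have hKsub : Set.Icc a b ⊆ Set.Ioo (0:ℝ) 1 := fun x hx =>
    ⟨lt_of_lt_of_le ha0 hx.1, lt_of_le_of_lt hx.2 hb1⟩
  have hKne : (1/2:ℝ) ∈ Set.Icc a b := ⟨ha2, hb2⟩
  obtain ⟨popt, hpK, hminK⟩ :=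
    (isCompact_Icc).exists_isMinOn ⟨_, hKne⟩ (hGcont.mono hKsub)
  have hpopt : popt ∈ Set.Ioo (0:ℝ) 1 := hKsub hpK
  have hpM : G popt ≤ G (1/2) := isMinOn_iff.mp hminK _ hKne
  have hglobal : ∀ q ∈ Set.Ioo (0:ℝ) 1, G popt ≤ G q := by
    intro q hq
    by_cases hqK : q ∈ Set.Icc a b
    · exact isMinOn_iff.mp hminK q hqK
    · rw [Set.mem_Icc, not_and_or, not_le, not_le] at hqK
      rcases hqK with hlt | hgt
      ·
        have haε : a ≤ ε₁/2 := min_le_right _ _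
        have hqε : q < ε₁ := by linarith
        have hq0 : 0 < q := hq.1
        have hinv : ε₁⁻¹ < q⁻¹ := inv_strictAnti₀ hq0 hqε
        have hεinv : ε₁⁻¹ = (G (1/2) - (δsucc - δcoll) + 1) / (δidle / L) := by
          rw [hε₁, inv_div]
        have hpos : 0 < δidle / (L:ℝ) := by positivity
        have hbig : G (1/2) - (δsucc - δcoll) + 1 < δidle / L * q⁻¹ := by
          rw [hεinv] at hinv
          calc G (1/2) - (δsucc - δcoll) + 1
              = δidle / L * ((G (1/2) - (δsucc - δcoll) + 1) / (δidle / L)) := by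
                field_simp
            _ < δidle / L * q⁻¹ := by exact mul_lt_mul_of_pos_left hinv hpos
        linarith [hlb1 q hq]
      · have hbε : 1 - ε₂/2 ≤ b := le_max_right _ _
        have hqε : 1 - q < ε₂ := by linarith
        have h1q : 0 < 1 - q := by linarith [hq.2]
        have hinv : ε₂⁻¹ < (1 - q)⁻¹ := inv_strictAnti₀ h1q hqε
        have hεinv : ε₂⁻¹ = (G (1/2) - (δsucc - δcoll) + 1) / (δcoll / L) := by
          rw [hε₂, inv_div]
        have hpos : 0 < δcoll / (L:ℝ) := by positivity
        have hbig : G (1/2) - (δsucc - δcoll) + 1 < δcoll / L * (1 - q)⁻¹ := by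
          rw [hεinv] at hinv
          calc G (1/2) - (δsucc - δcoll) + 1
              = δcoll / L * ((G (1/2) - (δsucc - δcoll) + 1) / (δcoll / L)) := by
                field_simp
            _ < δcoll / L * (1 - q)⁻¹ := by exact mul_lt_mul_of_pos_left hinv hpos
        linarith [hlb2 q hq]
  refine ⟨popt, hpopt, ?_, ?_⟩
  · intro q hq
    rw [key popt hpopt, key q hq]
    exact hglobal q hq
  · intro p' hp' hmin'
    by_contra hne
    have hmin'G : ∀ q ∈ Set.Ioo (0:ℝ) 1, G p' ≤ G q := by
      intro q hq
      have h := hmin' q hq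
      rwa [key p' hp', key q hq] at h
    have heq : G p' = G popt := le_antisymm (hmin'G popt hpopt) (hglobal p' hp')
    have hmid := hGstrict.2 hp' hpopt hne (by norm_num : (0:ℝ) < 1/2)
      (by norm_num : (0:ℝ) < 1/2) (by norm_num : (1/2:ℝ) + 1/2 = 1)
    have hmidmem : (1/2 : ℝ) • p' + (1/2 : ℝ) • popt ∈ Set.Ioo (0:ℝ) 1 :=
      (convex_Ioo (0:ℝ) 1) hp' hpopt (by norm_num) (by norm_num) (by norm_num)
    have hge := hglobal _ hmidmem
    rw [heq] at hmid
    simp only [smul_eq_mul] at hmid hge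
    linarith
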